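/- Soundness of the second lifting rule: if the empty string belongs to L(E) and every letter occurring in E is among x₁, ..., x_ℓ, then L(E · (x₁ + ... + x_ℓ)*) = L((x₁ + ... + x_ℓ)*) and L((x₁ + ... + x_ℓ)* · E) = L((x₁ + ... + x_ℓ)*). -/

import Mathlib

open RegularExpression Computability

/-- `letters E` is the set 𝒜(E) of letters occurring syntactically in `E`. -/
def letters {α : Type*} [DecidableEq α] : RegularExpression α → Finset α
  | RegularExpression.zero => ∅
  | RegularExpression.epsilon => ∅
  | RegularExpression.char a => {a}
  | RegularExpression.plus a b => letters a ∪ letters b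
  | RegularExpression.comp a b => letters a ∪ letters b
  | RegularExpression.star a => letters a

/-- The regular expression `x₁ + x₂ + ... + x_ℓ` built from a list of letters. -/
def sumChars {α : Type*} : List α → RegularExpression α :=
  fun l => (l.map RegularExpression.char).foldr RegularExpression.plus RegularExpression.zero

lemma mem_letters {α : Type*} [DecidableEq α] (E : RegularExpression α) :
    ∀ w ∈ E.matches', ∀ a ∈ w, a ∈ letters E := by
  induction E with
  | zero => intro w hw; exact absurd hw (by simp [matches'])
  | epsilon =>
      intro w hw
      have hw' : w = [] := by simpa using hw
      simp [hw']
  | char c =>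
      intro w hw; rw [matches'_char] at hw
      have hw' : w = [c] := hw
      subst hw'; intro a ha; simp only [List.mem_singleton] at ha
      subst ha; exact Finset.mem_singleton_self a
  | plus P Q ihP ihQ =>
      intro w hw a ha
      rcases hw with h | h
      · exact Finset.mem_union_left _ (ihP w h a ha)
      · exact Finset.mem_union_right _ (ihQ w h a ha)
  | comp P Q ihP ihQ =>
      intro w hw a ha
      rcases hw with ⟨x, hx, y, hy, rfl⟩
      rcases List.mem_append.1 ha with h | h
      · exact Finset.mem_union_left _ (ihP x hx a h)
      · exact Finset.mem_union_right _ (ihQ y hy a h)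
  | star P ih =>
      intro w hw a ha
      rw [matches'_star, Language.mem_kstar] at hw
      rcases hw with ⟨L, rfl, hL⟩
      rcases List.mem_flatten.1 ha with ⟨y, hy, hay⟩
      exact ih y (hL y hy) a hay

lemma char_mem_sumChars {α : Type*} (l : List α) {a : α} (ha : a ∈ l) :
    [a] ∈ (sumChars l).matches' := by
  induction l with
  | nil => cases ha
  | cons b t ih =>
      rcases List.mem_cons.1 ha with rfl | h
      · exact Or.inl rfl
      · exact Or.inr (ih h)

lemma matches'_le_star {α : Type*} [DecidableEq α] (E : RegularExpression α)
    (l : List α) (hsub : ∀ x ∈ letters E, x ∈ l) :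
    E.matches' ≤ (sumChars l).star.matches' := by
  intro w hw
  rw [matches'_star]
  have : w = (w.map (fun a => [a])).flatten := by
    clear hw
    induction w with
    | nil => rfl
    | cons a t ih => simpa using ih
  rw [this]
  apply Language.join_mem_kstar
  intro y hy
  rcases List.mem_map.1 hy with ⟨a, hat, rfl⟩
  exact char_mem_sumChars l (hsub a (mem_letters E w hw a hat))

/-- if `ε ∈ L(E)` and 𝒜(E) ⊆ {x₁, ..., x_ℓ} then
`L(E·(x₁+...+x_ℓ)*) = L((x₁+...+x_ℓ)*) = L((x₁+...+x_ℓ)*·E)`. -/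
theorem lifting_rule_two {α : Type*} [Fintype α] [DecidableEq α]
    (E : RegularExpression α) (l : List α)
    (heps : ([] : List α) ∈ E.matches')
    (hsub : ∀ x ∈ letters E, x ∈ l) :
    (E.comp (sumChars l).star).matches' = (sumChars l).star.matches'
      ∧ ((sumChars l).star.comp E).matches' = (sumChars l).star.matches' := by
  have hle := matches'_le_star E l hsub
  have hone : (1 : Language α) ≤ E.matches' := by
    intro w hw; have hw' : w = [] := (Language.mem_one w).1 hw; subst hw'; exact heps
  have hS : (E.comp (sumChars l).star).matches'
      = E.matches' * ((sumChars l).matches')∗ := by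
    rw [← matches'_star]; rfl
  have hS' : ((sumChars l).star.comp E).matches'
      = ((sumChars l).matches')∗ * E.matches' := by
    rw [← matches'_star]; rfl
  rw [matches'_star] at hle
  constructor
  · rw [hS, matches'_star]
    apply le_antisymm
    · calc E.matches' * ((sumChars l).matches')∗
          ≤ ((sumChars l).matches')∗ * ((sumChars l).matches')∗ :=
            mul_le_mul' hle le_rfl
        _ ≤ ((sumChars l).matches')∗ := (kstar_mul_kstar _).le
    · calc ((sumChars l).matches')∗ = 1 * ((sumChars l).matches')∗ := (one_mul _).symm
        _ ≤ E.matches' * ((sumChars l).matches')∗ := mul_le_mul' hone le_rfl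
  · rw [hS', matches'_star]
    apply le_antisymm
    · calc ((sumChars l).matches')∗ * E.matches'
          ≤ ((sumChars l).matches')∗ * ((sumChars l).matches')∗ :=
            mul_le_mul' le_rfl hle
        _ ≤ ((sumChars l).matches')∗ := (kstar_mul_kstar _).le
    · calc ((sumChars l).matches')∗ = ((sumChars l).matches')∗ * 1 := (mul_one _).symm
        _ ≤ ((sumChars l).matches')∗ * E.matches' := mul_le_mul' le_rfl hone
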